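/- Let 0 ≤ l < k ≤ n be integers and let λ ∈ Γ_k. Then (n−k+1) σ_{k−1}(λ) σ_l(λ) − (n−l+1) σ_{l−1}(λ) σ_k(λ) ≥ (k−l) · (C(n,k)/C(n,l))^{1/(k−l)} · σ_l(λ)^{(k−l+1)/(k−l)} · σ_k(λ)^{(k−l−1)/(k−l)}, with the convention σ_{−1} = 0 when l = 0. -/

import Mathlib

/-- The `k`-th elementary symmetric function of `x` restricted to the index set `s`. -/
noncomputable def sigmaEOn {ι : Type*} [DecidableEq ι] (s : Finset ι) (k : ℕ) (x : ι → ℝ) : ℝ :=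
  ∑ t ∈ s.powersetCard k, ∏ i ∈ t, x i

/-- The `k`-th elementary symmetric function `σ_k(x)`. -/
noncomputable def sigmaE {ι : Type*} [Fintype ι] [DecidableEq ι] (k : ℕ) (x : ι → ℝ) : ℝ :=
  sigmaEOn Finset.univ k x

/-- The Gårding cone `Γ_k ⊆ ℝ^n`. -/
def gardingCone (n k : ℕ) : Set (Fin n → ℝ) :=
  {lam | ∀ j : ℕ, 1 ≤ j → j ≤ k → 0 < sigmaE j lam}

/-- Elementary symmetric function with integer index: `σ_j = 0` for `j < 0`. -/
noncomputable def sigmaEIntOn {ι : Type*} [DecidableEq ι] (s : Finset ι) (k : ℤ) (x : ι → ℝ) : ℝ :=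
  if 0 ≤ k then sigmaEOn s k.toNat x else 0

noncomputable def sigmaEInt {ι : Type*} [Fintype ι] [DecidableEq ι] (k : ℤ) (x : ι → ℝ) : ℝ :=
  sigmaEIntOn Finset.univ k x

open Polynomial

namespace NewtonAux

lemma esymm_zero' (M : Multiset ℝ) : M.esymm 0 = 1 := by
  simp [Multiset.esymm, Multiset.powersetCard_zero_left]

lemma esymm_one' (M : Multiset ℝ) : M.esymm 1 = M.sum := by
  simp [Multiset.esymm, Multiset.powersetCard_one, Multiset.map_map, Function.comp]

lemma esymm_cons (a : ℝ) (s : Multiset ℝ) (j : ℕ) :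
    (a ::ₘ s).esymm (j+1) = s.esymm (j+1) + a * s.esymm j := by
  rw [Multiset.esymm, Multiset.powersetCard_cons, Multiset.map_add, Multiset.sum_add,
    Multiset.map_map]
  congr 1
  simp only [Multiset.esymm, Function.comp, Multiset.prod_cons]
  rw [← Multiset.sum_map_mul_left]

lemma esymm_eq_zero_of_lt (s : Multiset ℝ) (j : ℕ) (h : Multiset.card s < j) :
    s.esymm j = 0 := by
  rw [Multiset.esymm, Multiset.powersetCard_eq_empty j h]; simp

lemma esymm_card (s : Multiset ℝ) : s.esymm (Multiset.card s) = s.prod := by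
  induction s using Multiset.induction with
  | empty => simp [esymm_zero']
  | cons a s ih =>
      rw [Multiset.card_cons, esymm_cons, esymm_eq_zero_of_lt s _ (Nat.lt_succ_self _), ih,
        Multiset.prod_cons, zero_add]

lemma sq_sum_eq (M : Multiset ℝ) :
    M.sum ^ 2 = 2 * M.esymm 2 + (M.map (fun x => x ^ 2)).sum := by
  induction M using Multiset.induction with
  | empty => simp [esymm_eq_zero_of_lt 0 2 (by simp)]
  | cons a s ih =>
      rw [Multiset.sum_cons, show (2:ℕ) = 1 + 1 from rfl, esymm_cons, esymm_one',
        Multiset.map_cons, Multiset.sum_cons]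
      linear_combination ih

lemma cs_multiset (M : Multiset ℝ) :
    M.sum ^ 2 ≤ (Multiset.card M : ℝ) * (M.map (fun x => x ^ 2)).sum := by
  induction M using Multiset.induction with
  | empty => simp
  | cons a s ih =>
      rcases eq_or_ne s 0 with rfl | hs
      · simp
      · have hn : (1:ℝ) ≤ (Multiset.card s : ℝ) := by
          exact_mod_cast Multiset.card_pos.mpr hs
        have hq : (0:ℝ) ≤ (s.map (fun x => x ^ 2)).sum := by
          apply Multiset.sum_nonneg
          intro x hx
          obtain ⟨y, _, rfl⟩ := Multiset.mem_map.mp hx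
          positivity
        rw [Multiset.sum_cons, Multiset.map_cons, Multiset.sum_cons, Multiset.card_cons]
        push_cast
        nlinarith [sq_nonneg ((Multiset.card s : ℝ) * a - s.sum), ih, hq]

lemma esymm_inv (M : Multiset ℝ) (h0 : ∀ x ∈ M, x ≠ 0) :
    ∀ j, j ≤ Multiset.card M →
      (M.map (·⁻¹)).esymm j * M.prod = M.esymm (Multiset.card M - j) := by
  induction M using Multiset.induction with
  | empty =>
      intro j hj
      rw [Multiset.card_zero, Nat.le_zero] at hj
      subst hj
      simp [esymm_zero']
  | cons a s ih =>
      intro j hj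
      have ha : a ≠ 0 := h0 a (Multiset.mem_cons_self a s)
      have h0' : ∀ x ∈ s, x ≠ 0 := fun x hx => h0 x (Multiset.mem_cons_of_mem hx)
      rcases j with _ | t
      · simp only [esymm_zero', one_mul, Nat.sub_zero, Multiset.card_cons]
        rw [show Multiset.card s + 1 = Multiset.card (a ::ₘ s) by simp, esymm_card]
      · rw [Multiset.map_cons, esymm_cons, Multiset.prod_cons, Multiset.card_cons]
        have hts : t ≤ Multiset.card s := Nat.lt_succ_iff.mp (Nat.lt_of_succ_le (by simpa using hj))
        rcases Nat.lt_or_ge t (Multiset.card s) with hlt | hge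
        · -- t < card s : both terms
          have h1 := ih h0' (t+1) hlt
          have h2 := ih h0' t hts
          have hsub : Multiset.card s + 1 - (t + 1) = (Multiset.card s - (t+1)) + 1 := by omega
          rw [hsub, esymm_cons]
          have hsub2 : Multiset.card s - (t + 1) + 1 = Multiset.card s - t := by omega
          rw [hsub2]
          linear_combination a * h1 + h2 + ((s.map (·⁻¹)).esymm t * s.prod) * (inv_mul_cancel₀ ha)
        · -- t = card s
          have ht : t = Multiset.card s := le_antisymm hts hge
          subst ht
          have h2 := ih h0' (Multiset.card s) le_rfl
          rw [Nat.sub_self, esymm_zero'] at h2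
          rw [esymm_eq_zero_of_lt (s.map (·⁻¹)) _ (by simp), Nat.sub_self, esymm_zero']
          linear_combination (a⁻¹ * a) * h2 + inv_mul_cancel₀ ha

lemma deriv_step (M : Multiset ℝ) (hM : 1 ≤ Multiset.card M) :
    ∃ M' : Multiset ℝ, Multiset.card M' = Multiset.card M - 1 ∧
      ∀ j, j ≤ Multiset.card M - 1 →
        ((Multiset.card M : ℝ) - (j : ℝ)) * M.esymm j = (Multiset.card M : ℝ) * M'.esymm j := by
  set m := Multiset.card M with hm
  set P : ℝ[X] := (M.map fun a => X - C a).prod with hP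
  have hmonic : P.Monic := monic_multiset_prod_of_monic _ _ (fun a _ => monic_X_sub_C a)
  have hdeg : P.natDegree = m := by
    rw [hP, natDegree_multiset_prod_X_sub_C_eq_card]
  have hroots : P.roots = M := roots_multiset_prod_X_sub_C M
  set Q := derivative P with hQ
  have hQtop : Q.coeff (m - 1) = (m : ℝ) := by
    rw [hQ, coeff_derivative, Nat.sub_add_cancel hM, ← hdeg, hmonic.coeff_natDegree, one_mul,
      Nat.cast_sub (hdeg ▸ hM)]
    push_cast
    ring
  have hmne : (m : ℝ) ≠ 0 := by
    exact_mod_cast Nat.pos_iff_ne_zero.mp hM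
  have hdQ : Q.natDegree = m - 1 := by
    refine le_antisymm ((natDegree_derivative_le P).trans (by rw [hdeg])) ?_
    exact le_natDegree_of_ne_zero (by rw [hQtop]; exact hmne)
  have hcard : Multiset.card Q.roots = m - 1 := by
    refine le_antisymm ((card_roots' Q).trans (by rw [hdQ])) ?_
    have h1 := card_roots_le_derivative P
    rw [hroots, ← hQ] at h1
    omega
  have hlead : Q.leadingCoeff = (m : ℝ) := by
    rw [leadingCoeff, hdQ, hQtop]
  refine ⟨Q.roots, hcard, ?_⟩
  intro j hj
  have hjm : j ≤ m - 1 := hj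
  have e1 : Q.coeff (m - 1 - j) = (m : ℝ) * (-1) ^ j * Q.roots.esymm j := by
    have h := Polynomial.coeff_eq_esymm_roots_of_card (hcard.trans hdQ.symm)
      (k := m - 1 - j) (by rw [hdQ]; omega)
    rw [hdQ] at h
    have hidx : m - 1 - (m - 1 - j) = j := by omega
    rw [hidx, hlead] at h
    exact h
  have e2 : P.coeff (m - 1 - j + 1) = (-1) ^ j * M.esymm j := by
    have hc : Multiset.card P.roots = P.natDegree := by rw [hroots, hdeg]
    have h := Polynomial.coeff_eq_esymm_roots_of_card hc (k := m - 1 - j + 1)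
      (by rw [hdeg]; omega)
    rw [hdeg] at h
    have hidx : m - (m - 1 - j + 1) = j := by omega
    rw [hidx, hroots, hmonic.leadingCoeff, one_mul] at h
    exact h
  have e3 : Q.coeff (m - 1 - j) = P.coeff (m - 1 - j + 1) * ((m : ℝ) - (j : ℝ)) := by
    rw [hQ, coeff_derivative]
    congr 1
    have : ((m - 1 - j : ℕ) : ℝ) = (m : ℝ) - 1 - (j : ℝ) := by
      have h1 : (1:ℕ) + j ≤ m := by omega
      push_cast [Nat.cast_sub (by omega : j ≤ m - 1), Nat.cast_sub hM]
      ring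
    rw [this]; ring
  have key : (-1 : ℝ) ^ j * (((m : ℝ) - (j : ℝ)) * M.esymm j)
      = (-1 : ℝ) ^ j * ((m : ℝ) * Q.roots.esymm j) := by
    have := e1.symm.trans e3
    rw [e2] at this
    linear_combination -this
  exact mul_left_cancel₀ (pow_ne_zero j (by norm_num : (-1:ℝ) ≠ 0)) key

noncomputable def pE (j : ℕ) (M : Multiset ℝ) : ℝ :=
  M.esymm j / ((Multiset.card M).choose j : ℝ)

lemma nat_choose_id (m j : ℕ) (h1 : 1 ≤ m) (h2 : j ≤ m - 1) :
    (m - j) * m.choose j = m * (m - 1).choose j := by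
  have a := Nat.choose_succ_right_eq m j
  have b := Nat.add_one_mul_choose_eq (m - 1) j
  rw [Nat.sub_add_cancel h1] at b
  calc (m - j) * m.choose j = m.choose (j + 1) * (j + 1) := by rw [a]; ring
    _ = m * (m - 1).choose j := b.symm

theorem newton_pE : ∀ m : ℕ, ∀ M : Multiset ℝ, Multiset.card M = m →
    ∀ i : ℕ, i + 2 ≤ m → pE i M * pE (i + 2) M ≤ pE (i + 1) M ^ 2 := by
  intro m
  induction m using Nat.strong_induction_on with
  | _ m ih =>
    intro M hM i hi
    rcases Nat.lt_or_ge (i + 2) m with hlt | hge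
    · -- inductive step via derivative
      obtain ⟨M', hc', hrel⟩ := deriv_step M (by omega)
      rw [hM] at hc' hrel
      have hpe : ∀ j, j ≤ m - 1 → pE j M = pE j M' := by
        intro j hj
        have hjm : j ≤ m := by omega
        have h1 := hrel j hj
        have hid := nat_choose_id m j (by omega) hj
        have chooseid : ((m : ℝ) - (j : ℝ)) * (m.choose j : ℝ)
            = (m : ℝ) * ((m - 1).choose j : ℝ) := by
          have := congrArg (fun t : ℕ => (t : ℝ)) hid
          push_cast [Nat.cast_sub hjm] at this
          exact this
        have hc1 : (0 : ℝ) < (m.choose j : ℝ) := by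
          exact_mod_cast Nat.choose_pos hjm
        have hc2 : (0 : ℝ) < ((m - 1).choose j : ℝ) := by
          exact_mod_cast Nat.choose_pos hj
        have hmne : (m : ℝ) ≠ 0 := by
          have : 0 < m := by omega
          exact_mod_cast this.ne'
        simp only [pE, hM, hc']
        rw [div_eq_div_iff hc1.ne' hc2.ne']
        apply mul_left_cancel₀ hmne
        linear_combination (m.choose j : ℝ) * h1 - M.esymm j * chooseid
      rw [hpe i (by omega), hpe (i + 1) (by omega), hpe (i + 2) (by omega)]
      exact ih (m - 1) (by omega) M' hc' i (by omega)
    · -- base case: m = i + 2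
      have hm : m = i + 2 := le_antisymm hge hi
      subst hm
      rcases eq_or_ne M.prod 0 with hpr | hpr
      · have : pE (i + 2) M = 0 := by
          rw [pE, hM, ← hM, esymm_card, hpr, zero_div]
        rw [this, mul_zero]
        positivity
      · have h0 : ∀ x ∈ M, x ≠ 0 := by
          intro x hx hx0
          exact hpr (Multiset.prod_eq_zero (hx0 ▸ hx))
        set N := M.map (·⁻¹) with hN
        have hcN : Multiset.card N = i + 2 := by rw [hN, Multiset.card_map, hM]
        have hinv := esymm_inv M h0
        rw [hM] at hinv
        have e0 : M.esymm (i + 2) = M.prod := by rw [← hM, esymm_card]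
        have e1 : M.esymm (i + 1) = N.sum * M.prod := by
          have h := hinv 1 (by omega)
          rw [esymm_one', ← hN] at h
          have hidx : i + 2 - 1 = i + 1 := by omega
          rw [hidx] at h
          exact h.symm
        have e2 : M.esymm i = N.esymm 2 * M.prod := by
          have h := hinv 2 (by omega)
          rw [← hN] at h
          have hidx : i + 2 - 2 = i := by omega
          rw [hidx] at h
          exact h.symm
        -- key real inequality
        have hsq := sq_sum_eq N
        have hcs := cs_multiset N
        rw [hcN] at hcs
        set S := N.sum with hS
        set q := (N.map fun x => x ^ 2).sum with hq
        set e2N := N.esymm 2 with he2N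
        have hm2 : (2 : ℝ) ≤ ((i : ℝ) + 2) := by
          have := Nat.cast_nonneg (α := ℝ) i
          linarith
        have hkey : 2 * ((i : ℝ) + 2) ^ 2 * e2N ≤ ((i : ℝ) + 2) * ((i : ℝ) + 1) * S ^ 2 := by
          have h1 : ((i : ℝ) + 2) * S ^ 2 ≤ ((i : ℝ) + 2) ^ 2 * q := by
            have := hcs
            push_cast at this
            nlinarith [this]
          nlinarith [h1, hsq]
        -- choose values
        have hch1 : ((i + 2).choose (i + 1) : ℝ) = (i : ℝ) + 2 := by
          have : (i + 2).choose (i + 1) = i + 2 := by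
            rw [show i + 2 = (i + 1) + 1 from rfl, Nat.choose_succ_self_right]
          rw [this]
          norm_cast
        have hch2 : (i + 2).choose i = (i + 2).choose 2 := by
          have h := Nat.choose_symm (by omega : i ≤ i + 2)
          rw [show i + 2 - i = 2 from by omega] at h
          exact h.symm
        have hch3 : 2 * ((i + 2).choose 2 : ℝ) = ((i : ℝ) + 2) * ((i : ℝ) + 1) := by
          have a := Nat.choose_succ_right_eq (i + 2) 1
          rw [Nat.choose_one_right] at a
          norm_num at a
          calc 2 * ((i + 2).choose 2 : ℝ) = (((i + 2).choose 2 * 2 : ℕ) : ℝ) := by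
                push_cast; ring
            _ = (((i + 2) * (i + 1) : ℕ) : ℝ) := by rw [a]
            _ = ((i : ℝ) + 2) * ((i : ℝ) + 1) := by push_cast; ring
        have hC2pos : (0 : ℝ) < ((i + 2).choose 2 : ℝ) := by
          exact_mod_cast Nat.choose_pos (by omega : 2 ≤ i + 2)
        have hchtop : ((i + 2).choose (i + 2) : ℝ) = 1 := by
          rw [Nat.choose_self]; norm_num
        rw [pE, pE, pE, hM, e0, e1, e2, hch1, hchtop, hch2]
        rw [div_one, div_pow, div_mul_eq_mul_div, div_le_div_iff₀ hC2pos (by positivity)]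
        nlinarith [mul_le_mul_of_nonneg_right hkey (sq_nonneg M.prod), hch3, sq_nonneg M.prod, hC2pos]

end NewtonAux

set_option maxHeartbeats 1000000 in
/-- for `λ ∈ Γ_k`,
`(n−k+1) σ_{k−1} σ_l − (n−l+1) σ_{l−1} σ_k ≥ (k−l)(C(n,k)/C(n,l))^{1/(k−l)} σ_l^{(k−l+1)/(k−l)} σ_k^{(k−l−1)/(k−l)}`. -/
theorem sum_partials_sigma_lower_bound (n k l : ℕ) (hlk : l < k) (hkn : k ≤ n)
    (lam : Fin n → ℝ) (hlam : lam ∈ gardingCone n k) :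
    ((k : ℝ) - (l : ℝ)) * ((n.choose k : ℝ) / (n.choose l : ℝ)) ^ (1 / ((k : ℝ) - (l : ℝ)))
        * sigmaE l lam ^ (((k : ℝ) - (l : ℝ) + 1) / ((k : ℝ) - (l : ℝ)))
        * sigmaE k lam ^ (((k : ℝ) - (l : ℝ) - 1) / ((k : ℝ) - (l : ℝ)))
      ≤ ((n : ℝ) - (k : ℝ) + 1) * sigmaE (k - 1) lam * sigmaE l lam
        - ((n : ℝ) - (l : ℝ) + 1) * sigmaEInt ((l : ℤ) - 1) lam * sigmaE k lam := by
  classical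
  have hk1 : 1 ≤ k := by omega
  set M : Multiset ℝ := Finset.univ.val.map lam with hMdef
  have hcard : Multiset.card M = n := by simp [hMdef]
  have hsig : ∀ j : ℕ, sigmaE j lam = M.esymm j := by
    intro j
    rw [sigmaE, sigmaEOn, hMdef, Finset.esymm_map_val]
  set m := k - l with hmdef
  have hm1 : 1 ≤ m := by omega
  have hE : (k : ℝ) - (l : ℝ) = (m : ℝ) := by
    rw [hmdef, Nat.cast_sub hlk.le]
  have hmpos : (0 : ℝ) < (m : ℝ) := by exact_mod_cast hm1
  have hmne : (m : ℝ) ≠ 0 := hmpos.ne'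
  set P : ℕ → ℝ := fun j => NewtonAux.pE j M with hPdef
  have hPj : ∀ j, P j = M.esymm j / (n.choose j : ℝ) := by
    intro j
    simp only [hPdef, NewtonAux.pE, hcard]
  have hsigP : ∀ j, j ≤ n → sigmaE j lam = (n.choose j : ℝ) * P j := by
    intro j hj
    have hc : (0 : ℝ) < (n.choose j : ℝ) := by exact_mod_cast Nat.choose_pos hj
    rw [hPj, hsig]
    field_simp
  have hP0 : P 0 = 1 := by
    rw [hPj, NewtonAux.esymm_zero']
    simp
  have hPpos : ∀ j, j ≤ k → 0 < P j := by
    intro j hj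
    rcases Nat.eq_zero_or_pos j with h0 | h1
    · rw [h0, hP0]; norm_num
    · have hσ := hlam j h1 hj
      rw [hsigP j (by omega)] at hσ
      have hc : (0 : ℝ) < (n.choose j : ℝ) := by
        exact_mod_cast Nat.choose_pos (by omega : j ≤ n)
      nlinarith [hσ, hc]
  have hnewton : ∀ i, i + 2 ≤ n → P i * P (i + 2) ≤ P (i + 1) ^ 2 := by
    intro i hi
    simpa only [hPdef] using NewtonAux.newton_pE n M hcard i hi
  have hPk := hPpos k le_rfl
  have hPk1 := hPpos (k - 1) (by omega)
  have hPl := hPpos l hlk.le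
  -- ratio monotonicity
  have hr : ∀ j, 1 ≤ j → j ≤ k → P (j - 1) * P k ≤ P (k - 1) * P j := by
    suffices H : ∀ d, d ≤ k - 1 → P (k - 1 - d) * P k ≤ P (k - 1) * P (k - d) by
      intro j h1 h2
      have := H (k - j) (by omega)
      rw [show k - 1 - (k - j) = j - 1 by omega, show k - (k - j) = j by omega] at this
      exact this
    intro d hd
    induction d with
    | zero =>
        rw [show k - 1 - 0 = k - 1 by omega, show k - 0 = k by omega]
    | succ d ihd =>
        have IH := ihd (by omega)
        have hnw := hnewton (k - 2 - d) (by omega)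
        rw [show k - 2 - d + 2 = k - d by omega, show k - 2 - d + 1 = k - 1 - d by omega] at hnw
        have hPkd := hPpos (k - d) (by omega)
        have hP1d := hPpos (k - 1 - d) (by omega)
        have A := mul_le_mul_of_nonneg_right hnw hPk.le
        have B := mul_le_mul_of_nonneg_left IH hP1d.le
        have C : (P (k - 1 - (d + 1)) * P k) * P (k - d)
            ≤ (P (k - 1) * P (k - (d + 1))) * P (k - d) := by
          rw [show k - 1 - (d + 1) = k - 2 - d by omega, show k - (d + 1) = k - 1 - d by omega]
          nlinarith [A, B]
        exact le_of_mul_le_mul_right C hPkd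
  -- power chain
  have hchain : P l * P k ^ m ≤ P (k - 1) ^ m * P k := by
    suffices H : ∀ d, d ≤ m → P (k - d) * P k ^ d ≤ P (k - 1) ^ d * P k by
      have := H m le_rfl
      rw [show k - m = l by omega] at this
      exact this
    intro d hd
    induction d with
    | zero => rw [show k - 0 = k by omega]; simp
    | succ d ihd =>
        have IH := ihd (by omega)
        have hrj := hr (k - d) (by omega) (by omega)
        rw [show k - d - 1 = k - (d + 1) by omega] at hrj
        calc P (k - (d + 1)) * P k ^ (d + 1)
            = (P (k - (d + 1)) * P k) * P k ^ d := by ring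
          _ ≤ (P (k - 1) * P (k - d)) * P k ^ d :=
              mul_le_mul_of_nonneg_right hrj (pow_nonneg hPk.le d)
          _ = P (k - 1) * (P (k - d) * P k ^ d) := by ring
          _ ≤ P (k - 1) * (P (k - 1) ^ d * P k) := mul_le_mul_of_nonneg_left IH hPk1.le
          _ = P (k - 1) ^ (d + 1) * P k := by ring
  -- the rpow quantity
  set t : ℝ := (P l / P k) ^ ((1 : ℝ) / (m : ℝ)) with htdef
  have htpos : 0 < t := Real.rpow_pos_of_pos (div_pos hPl hPk) _
  have htm : t ^ m = P l / P k := by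
    rw [htdef, ← Real.rpow_natCast ((P l / P k) ^ ((1 : ℝ) / (m : ℝ))) m,
      ← Real.rpow_mul (div_pos hPl hPk).le]
    rw [show (1 : ℝ) / (m : ℝ) * (m : ℕ) = 1 by field_simp]
    exact Real.rpow_one _
  have htu : t * P k ≤ P (k - 1) := by
    have hu : t ^ m ≤ (P (k - 1) / P k) ^ m := by
      rw [htm, div_pow, div_le_div_iff₀ hPk (pow_pos hPk m)]
      exact hchain
    have ht2 : t ≤ P (k - 1) / P k :=
      le_of_pow_le_pow_left₀ (by omega) (div_pos hPk1 hPk).le hu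
    calc t * P k ≤ (P (k - 1) / P k) * P k := mul_le_mul_of_nonneg_right ht2 hPk.le
      _ = P (k - 1) := div_mul_cancel₀ _ hPk.ne'
  -- key inequality in normalized form
  have hlv : (l : ℝ) * (P (l - 1) * P k) ≤ (l : ℝ) * (P (k - 1) * P l) := by
    rcases Nat.eq_zero_or_pos l with hl0 | hl1
    · rw [hl0]; norm_num
    · exact mul_le_mul_of_nonneg_left (hr l hl1 hlk.le) (Nat.cast_nonneg l)
  have hkm : (k : ℝ) = (m : ℝ) + (l : ℝ) := by linarith [hE]
  have hkey : (m : ℝ) * (P l * P k * t)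
      ≤ (k : ℝ) * P (k - 1) * P l - (l : ℝ) * (P (l - 1) * P k) := by
    have h1 : (m : ℝ) * (P l * (t * P k)) ≤ (m : ℝ) * (P l * P (k - 1)) :=
      mul_le_mul_of_nonneg_left (mul_le_mul_of_nonneg_left htu hPl.le) (Nat.cast_nonneg m)
    rw [hkm]
    linarith [h1, hlv]
  -- casts and binomial identities
  have hCk : (0 : ℝ) < (n.choose k : ℝ) := by exact_mod_cast Nat.choose_pos hkn
  have hCl : (0 : ℝ) < (n.choose l : ℝ) := by
    exact_mod_cast Nat.choose_pos (by omega : l ≤ n)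
  have hcast_k : ((n : ℝ) - (k : ℝ) + 1) = ((n - k + 1 : ℕ) : ℝ) := by
    push_cast [Nat.cast_sub hkn]
    ring
  have hid_k : ((n - k + 1 : ℕ) : ℝ) * (n.choose (k - 1) : ℝ)
      = (k : ℝ) * (n.choose k : ℝ) := by
    have h := Nat.choose_succ_right_eq n (k - 1)
    rw [Nat.sub_add_cancel hk1, show n - (k - 1) = n - k + 1 by omega] at h
    have := congrArg (fun t : ℕ => (t : ℝ)) h
    push_cast [Nat.cast_sub hkn] at this ⊢
    linarith
  have hσl : sigmaE l lam = (n.choose l : ℝ) * P l := hsigP l (by omega)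
  have hσk : sigmaE k lam = (n.choose k : ℝ) * P k := hsigP k hkn
  have hσk1 : sigmaE (k - 1) lam = (n.choose (k - 1) : ℝ) * P (k - 1) := hsigP (k - 1) (by omega)
  have hσl1 : ((n : ℝ) - (l : ℝ) + 1) * sigmaEInt ((l : ℤ) - 1) lam
      = (l : ℝ) * (n.choose l : ℝ) * P (l - 1) := by
    rcases Nat.eq_zero_or_pos l with hl0 | hl1
    · subst hl0
      simp [sigmaEInt, sigmaEIntOn]
    · have hInt : sigmaEInt ((l : ℤ) - 1) lam = sigmaE (l - 1) lam := by
        rw [sigmaEInt, sigmaEIntOn, if_pos (by omega : (0 : ℤ) ≤ (l : ℤ) - 1)]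
        rw [show ((l : ℤ) - 1).toNat = l - 1 by omega]
        rfl
      have hcast_l : ((n : ℝ) - (l : ℝ) + 1) = ((n - l + 1 : ℕ) : ℝ) := by
        push_cast [Nat.cast_sub (by omega : l ≤ n)]
        ring
      have hid_l : ((n - l + 1 : ℕ) : ℝ) * (n.choose (l - 1) : ℝ)
          = (l : ℝ) * (n.choose l : ℝ) := by
        have h := Nat.choose_succ_right_eq n (l - 1)
        rw [Nat.sub_add_cancel hl1, show n - (l - 1) = n - l + 1 by omega] at h
        have := congrArg (fun t : ℕ => (t : ℝ)) h
        push_cast [Nat.cast_sub (by omega : l ≤ n)] at this ⊢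
        linarith
      rw [hInt, hsigP (l - 1) (by omega), hcast_l]
      linear_combination P (l - 1) * hid_l
  -- rewrite the LHS of the goal
  have hLHS : ((k : ℝ) - (l : ℝ)) * ((n.choose k : ℝ) / (n.choose l : ℝ)) ^ (1 / ((k : ℝ) - (l : ℝ)))
        * sigmaE l lam ^ (((k : ℝ) - (l : ℝ) + 1) / ((k : ℝ) - (l : ℝ)))
        * sigmaE k lam ^ (((k : ℝ) - (l : ℝ) - 1) / ((k : ℝ) - (l : ℝ)))
      = (m : ℝ) * ((n.choose k : ℝ) * (n.choose l : ℝ) * (P l * P k * t)) := by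
    rw [hE, hσl, hσk]
    have e1 : ((m : ℝ) + 1) / (m : ℝ) = 1 + 1 / (m : ℝ) := by field_simp
    have e2 : ((m : ℝ) - 1) / (m : ℝ) = 1 - 1 / (m : ℝ) := by field_simp
    have hClPl : (0 : ℝ) < (n.choose l : ℝ) * P l := mul_pos hCl hPl
    have hCkPk : (0 : ℝ) < (n.choose k : ℝ) * P k := mul_pos hCk hPk
    rw [e1, e2, Real.rpow_add hClPl, Real.rpow_sub hCkPk, Real.rpow_one, Real.rpow_one]
    rw [Real.mul_rpow hCl.le hPl.le, Real.mul_rpow hCk.le hPk.le,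
      Real.div_rpow hCk.le hCl.le, htdef, Real.div_rpow hPl.le hPk.le]
    have r1 : (0 : ℝ) < (n.choose l : ℝ) ^ ((1 : ℝ) / (m : ℝ)) := Real.rpow_pos_of_pos hCl _
    have r2 : (0 : ℝ) < (n.choose k : ℝ) ^ ((1 : ℝ) / (m : ℝ)) := Real.rpow_pos_of_pos hCk _
    have r3 : (0 : ℝ) < P k ^ ((1 : ℝ) / (m : ℝ)) := Real.rpow_pos_of_pos hPk _
    field_simp
  rw [hLHS]
  have hterm1 : ((n : ℝ) - (k : ℝ) + 1) * sigmaE (k - 1) lam * sigmaE l lam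
      = (k : ℝ) * (n.choose k : ℝ) * P (k - 1) * ((n.choose l : ℝ) * P l) := by
    rw [hσk1, hσl, hcast_k]
    linear_combination (P (k - 1) * ((n.choose l : ℝ) * P l)) * hid_k
  have hterm2 : ((n : ℝ) - (l : ℝ) + 1) * sigmaEInt ((l : ℤ) - 1) lam * sigmaE k lam
      = (l : ℝ) * (n.choose l : ℝ) * P (l - 1) * ((n.choose k : ℝ) * P k) := by
    rw [hσk]
    linear_combination ((n.choose k : ℝ) * P k) * hσl1
  rw [hterm1, hterm2]
  have hfin := mul_le_mul_of_nonneg_left hkey (le_of_lt (mul_pos hCk hCl))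
  nlinarith [hfin]
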